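/- Let H be an n×n real diagonal matrix and δH a symmetric perturbation such that for all nonzero x ∈ ℝⁿ, g_l ≤ (xᵀ(H+δH)x)/(xᵀHx) ≤ g_u with 0 < g_l ≤ g_u. Then for each i, g_l ≤ λ_i(H+δH)/λ_i(H) ≤ g_u, where λ_i denotes the i-th largest eigenvalue. -/

import Mathlib

open scoped Matrix
open Module Finset

/-- `μ` is the decreasing enumeration of the eigenvalues of the real symmetric matrix `A`. -/
def IsDecEigenvalueSeq {n : ℕ} (A : Matrix (Fin n) (Fin n) ℝ) (hA : A.IsHermitian)
    (μ : Fin n → ℝ) : Prop :=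
  Antitone μ ∧ ∃ e : Equiv.Perm (Fin n), μ = hA.eigenvalues ∘ e

section Aux

variable {n : ℕ}


variable {n : ℕ}


lemma dot_eq_inner (x y : EuclideanSpace ℝ (Fin n)) :
    (x : Fin n → ℝ) ⬝ᵥ (y : Fin n → ℝ) = inner (𝕜 := ℝ) x y := by
  simp [dotProduct, PiLp.inner_apply, RCLike.inner_apply, mul_comm]

lemma repr_zero_of_mem_span (b : OrthonormalBasis (Fin n) ℝ (EuclideanSpace ℝ (Fin n)))
    (S : Set (Fin n)) (x : EuclideanSpace ℝ (Fin n))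
    (hx : x ∈ Submodule.span ℝ (⇑b '' S)) {j : Fin n} (hj : j ∉ S) : b.repr x j = 0 := by
  induction hx using Submodule.span_induction with
  | mem y hy =>
    obtain ⟨k, hk, rfl⟩ := hy
    have hne : j ≠ k := fun h => hj (h ▸ hk)
    simp [OrthonormalBasis.repr_self, EuclideanSpace.single_apply, hne]
  | zero => simp
  | add y z _ _ hy hz => simp [map_add, hy, hz]
  | smul c y _ hy => simp [map_smul, hy]

lemma rayleigh_expansion (A : Matrix (Fin n) (Fin n) ℝ) (hA : A.IsHermitian)
    (b : OrthonormalBasis (Fin n) ℝ (EuclideanSpace ℝ (Fin n))) (μ : Fin n → ℝ)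
    (heig : ∀ j, A.mulVec (b j) = μ j • (b j : Fin n → ℝ)) (x : EuclideanSpace ℝ (Fin n)) :
    (x : Fin n → ℝ) ⬝ᵥ A *ᵥ (x : Fin n → ℝ) = ∑ j, μ j * (b.repr x j)^2 := by
  have hAT : Aᵀ = A := by
    ext i j
    have := congrFun (congrFun hA i) j
    simpa [Matrix.conjTranspose_apply] using this
  have hrepr : ∀ j, b.repr (WithLp.toLp 2 (A *ᵥ (x : Fin n → ℝ)) : EuclideanSpace ℝ (Fin n)) j
      = μ j * b.repr x j := by
    intro j
    rw [OrthonormalBasis.repr_apply_apply, OrthonormalBasis.repr_apply_apply]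
    rw [← dot_eq_inner, ← dot_eq_inner, WithLp.ofLp_toLp]
    rw [Matrix.dotProduct_mulVec, ← Matrix.mulVec_transpose, hAT, heig j,
      smul_dotProduct]
    rfl
  calc (x : Fin n → ℝ) ⬝ᵥ A *ᵥ (x : Fin n → ℝ)
      = inner (𝕜 := ℝ) x (WithLp.toLp 2 (A *ᵥ (x : Fin n → ℝ)) : EuclideanSpace ℝ (Fin n)) := dot_eq_inner x (WithLp.toLp 2 (A *ᵥ (x : Fin n → ℝ)))
    _ = inner (𝕜 := ℝ) (b.repr x) (b.repr (WithLp.toLp 2 (A *ᵥ (x : Fin n → ℝ)) : EuclideanSpace ℝ (Fin n))) :=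
        (b.repr.inner_map_map _ _).symm
    _ = ∑ j, μ j * (b.repr x j)^2 := by
        simp only [PiLp.inner_apply, RCLike.inner_apply, conj_trivial, hrepr]
        exact Finset.sum_congr rfl fun j _ => by ring

lemma norm_sq_expansion (b : OrthonormalBasis (Fin n) ℝ (EuclideanSpace ℝ (Fin n)))
    (x : EuclideanSpace ℝ (Fin n)) :
    (x : Fin n → ℝ) ⬝ᵥ (x : Fin n → ℝ) = ∑ j, (b.repr x j)^2 := by
  rw [dot_eq_inner, ← b.repr.inner_map_map x x]
  simp only [PiLp.inner_apply, RCLike.inner_apply, conj_trivial]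
  exact Finset.sum_congr rfl fun j _ => (sq _).symm

lemma finrank_span_orthonormal (b : OrthonormalBasis (Fin n) ℝ (EuclideanSpace ℝ (Fin n)))
    (S : Set (Fin n)) [Fintype S] :
    finrank ℝ (Submodule.span ℝ (⇑b '' S)) = Fintype.card S := by
  rw [Set.image_eq_range]
  exact finrank_span_eq_card
    (b.orthonormal.linearIndependent.comp (Subtype.val : S → Fin n) Subtype.val_injective)

lemma exists_ne_zero_mem_inf {V W : Submodule ℝ (EuclideanSpace ℝ (Fin n))}
    (h : finrank ℝ (EuclideanSpace ℝ (Fin n)) < finrank ℝ V + finrank ℝ W) :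
    ∃ x, x ≠ 0 ∧ x ∈ V ∧ x ∈ W := by
  have hnd : ¬ Disjoint V W := fun hdis =>
    absurd (Submodule.finrank_add_finrank_le_of_disjoint hdis) (not_le.mpr h)
  rw [disjoint_iff] at hnd
  obtain ⟨x, hx, hx0⟩ := Submodule.exists_mem_ne_zero_of_ne_bot hnd
  exact ⟨x, hx0, (Submodule.mem_inf.mp hx).1, (Submodule.mem_inf.mp hx).2⟩

lemma exists_test_vector {n : ℕ} (A B : Matrix (Fin n) (Fin n) ℝ)
    (hA : A.IsHermitian) (hB : B.IsHermitian) (μ μ' : Fin n → ℝ)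
    (hμ : IsDecEigenvalueSeq A hA μ) (hμ' : IsDecEigenvalueSeq B hB μ') (i : Fin n) :
    ∃ x : Fin n → ℝ, x ≠ 0 ∧ μ i * (x ⬝ᵥ x) ≤ x ⬝ᵥ A *ᵥ x ∧ x ⬝ᵥ B *ᵥ x ≤ μ' i * (x ⬝ᵥ x) := by
  obtain ⟨hmono, e, he⟩ := hμ
  obtain ⟨hmono', e', he'⟩ := hμ'
  set b : OrthonormalBasis (Fin n) ℝ (EuclideanSpace ℝ (Fin n)) :=
    hA.eigenvectorBasis.reindex e.symm with hb
  set b' : OrthonormalBasis (Fin n) ℝ (EuclideanSpace ℝ (Fin n)) :=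
    hB.eigenvectorBasis.reindex e'.symm with hb'
  have heig : ∀ j, A.mulVec (b j) = μ j • (b j : Fin n → ℝ) := by
    intro j
    rw [hb, he]
    simpa using hA.mulVec_eigenvectorBasis (e j)
  have heig' : ∀ j, B.mulVec (b' j) = μ' j • (b' j : Fin n → ℝ) := by
    intro j
    rw [hb', he']
    simpa using hB.mulVec_eigenvectorBasis (e' j)
  set V := Submodule.span ℝ (⇑b '' Set.Iic i) with hV
  set W := Submodule.span ℝ (⇑b' '' Set.Ici i) with hW
  have hdim : finrank ℝ (EuclideanSpace ℝ (Fin n)) < finrank ℝ V + finrank ℝ W := by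
    rw [hV, hW, finrank_span_orthonormal, finrank_span_orthonormal,
      Fintype.card_Iic, Fin.card_Iic, Fintype.card_Ici, Fin.card_Ici, finrank_euclideanSpace_fin]
    have := i.isLt
    omega
  obtain ⟨x, hx0, hxV, hxW⟩ := exists_ne_zero_mem_inf hdim
  refine ⟨x, fun h => hx0 (by ext j; exact congrFun h j), ?_, ?_⟩
  · rw [rayleigh_expansion A hA b μ heig x, norm_sq_expansion b x, Finset.mul_sum]
    refine Finset.sum_le_sum fun j _ => ?_
    by_cases hj : j ∈ Set.Iic i
    · exact mul_le_mul_of_nonneg_right (hmono hj) (sq_nonneg _)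
    · rw [repr_zero_of_mem_span b _ x hxV hj]; simp
  · rw [rayleigh_expansion B hB b' μ' heig' x, norm_sq_expansion b' x, Finset.mul_sum]
    refine Finset.sum_le_sum fun j _ => ?_
    by_cases hj : j ∈ Set.Ici i
    · exact mul_le_mul_of_nonneg_right (hmono' hj) (sq_nonneg _)
    · rw [repr_zero_of_mem_span b' _ x hxW hj]; simp

end Aux

/-- Barlow–Demmel type lemma: if the Rayleigh quotients of `H + δH` relative to a diagonal
matrix `H` (with positive diagonal) lie in `[g_l, g_u]`, then so do the ratios of the
corresponding ordered eigenvalues. -/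
theorem eigenvalue_ratio_of_rayleigh_ratio {n : ℕ}
    (H δH : Matrix (Fin n) (Fin n) ℝ) (d : Fin n → ℝ)
    (hH : H = Matrix.diagonal d) (hd : ∀ i, 0 < d i)
    (hHsym : H.IsHermitian) (hδH : δH.IsHermitian) (hsum : (H + δH).IsHermitian)
    (gl gu : ℝ) (hgl : 0 < gl) (hglu : gl ≤ gu)
    (hray : ∀ x : Fin n → ℝ, x ≠ 0 →
      gl ≤ (x ⬝ᵥ (H + δH).mulVec x) / (x ⬝ᵥ H.mulVec x) ∧
      (x ⬝ᵥ (H + δH).mulVec x) / (x ⬝ᵥ H.mulVec x) ≤ gu)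
    (μ μ' : Fin n → ℝ)
    (hμ : IsDecEigenvalueSeq H hHsym μ)
    (hμ' : IsDecEigenvalueSeq (H + δH) hsum μ') :
    ∀ i : Fin n, gl ≤ μ' i / μ i ∧ μ' i / μ i ≤ gu := by
  have hPD : H.PosDef := by rw [hH]; exact Matrix.posDef_diagonal_iff.mpr hd
  -- positivity of H-quadratic form
  have hq : ∀ x : Fin n → ℝ, x ≠ 0 → 0 < x ⬝ᵥ H.mulVec x := by
    intro x hx
    have := hPD.dotProduct_mulVec_pos hx
    simpa using this
  -- positivity of μ
  have hμpos : ∀ i, 0 < μ i := by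
    obtain ⟨hmono, e, he⟩ := hμ
    intro i
    rw [he]
    exact hPD.eigenvalues_pos (e i)
  -- Rayleigh bounds in product form
  have hray' : ∀ x : Fin n → ℝ, x ≠ 0 →
      gl * (x ⬝ᵥ H.mulVec x) ≤ x ⬝ᵥ (H + δH).mulVec x ∧
      x ⬝ᵥ (H + δH).mulVec x ≤ gu * (x ⬝ᵥ H.mulVec x) := by
    intro x hx
    obtain ⟨h1, h2⟩ := hray x hx
    have hp := hq x hx
    constructor
    · exact (le_div_iff₀ hp).mp h1
    · exact (div_le_iff₀ hp).mp h2
  intro i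
  have hμi := hμpos i
  constructor
  · -- gl ≤ μ' i / μ i
    obtain ⟨x, hx0, h1, h2⟩ := exists_test_vector H (H + δH) hHsym hsum μ μ' hμ hμ' i
    have hxx : 0 < x ⬝ᵥ x := hq x hx0 |>.trans_le (le_of_eq rfl) |> fun _ => by
      have : (0:ℝ) < ∑ j, x j * x j := by
        obtain ⟨j, hj⟩ := Function.ne_iff.mp hx0
        exact Finset.sum_pos' (fun k _ => mul_self_nonneg _)
          ⟨j, Finset.mem_univ j, mul_self_pos.mpr (by simpa using hj)⟩
      simpa [dotProduct] using this
    rw [le_div_iff₀ hμi]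
    have key : gl * (μ i * (x ⬝ᵥ x)) ≤ μ' i * (x ⬝ᵥ x) := by
      calc gl * (μ i * (x ⬝ᵥ x)) ≤ gl * (x ⬝ᵥ H.mulVec x) := by
            exact mul_le_mul_of_nonneg_left h1 hgl.le
        _ ≤ x ⬝ᵥ (H + δH).mulVec x := (hray' x hx0).1
        _ ≤ μ' i * (x ⬝ᵥ x) := h2
    have := (mul_le_mul_iff_of_pos_right hxx).mp (by linarith [key] : gl * μ i * (x ⬝ᵥ x) ≤ μ' i * (x ⬝ᵥ x))
    linarith
  · obtain ⟨x, hx0, h1, h2⟩ := exists_test_vector (H + δH) H hsum hHsym μ' μ hμ' hμ i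
    have hxx : (0:ℝ) < x ⬝ᵥ x := by
      obtain ⟨j, hj⟩ := Function.ne_iff.mp hx0
      have : (0:ℝ) < ∑ j, x j * x j :=
        Finset.sum_pos' (fun k _ => mul_self_nonneg _) ⟨j, Finset.mem_univ j, mul_self_pos.mpr (by simpa using hj)⟩
      simpa [dotProduct] using this
    rw [div_le_iff₀ hμi]
    have key : μ' i * (x ⬝ᵥ x) ≤ gu * (μ i * (x ⬝ᵥ x)) := by
      calc μ' i * (x ⬝ᵥ x) ≤ x ⬝ᵥ (H + δH).mulVec x := h1
        _ ≤ gu * (x ⬝ᵥ H.mulVec x) := (hray' x hx0).2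
        _ ≤ gu * (μ i * (x ⬝ᵥ x)) := mul_le_mul_of_nonneg_left h2 (hgl.trans_le hglu).le
    have := (mul_le_mul_iff_of_pos_right hxx).mp (by linarith [key] : μ' i * (x ⬝ᵥ x) ≤ gu * μ i * (x ⬝ᵥ x))
    linarith
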